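/- Suppose f : ℝⁿ × ℝᵐ → ℝ is ℓ-smooth (its gradient is ℓ-Lipschitz) and for each x the function y ↦ f(x,y) is μ-strongly concave with μ > 0. Then the map x ↦ y*(x) := argmax_y f(x,y) is well-defined and Lipschitz continuous with constant κ = ℓ/μ. -/

import Mathlib

open scoped RealInnerProductSpace
open Filter Set Topology

lemma strongConcave_fderiv_ineq {E : Type*} [NormedAddCommGroup E] [NormedSpace ℝ E]
    {μ : ℝ} {h : E → ℝ} (hc : StrongConcaveOn Set.univ μ h)
    {x : E} {D : E →L[ℝ] ℝ} (hd : HasFDerivAt h D x) (y : E) :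
    h y + μ / 2 * ‖y - x‖ ^ 2 ≤ h x + D (y - x) := by
  set φ : ℝ → ℝ := fun t => h (x + t • (y - x)) with hφ
  have hline : HasDerivAt φ (D (y - x)) 0 := by
    have hg : HasDerivAt (fun t : ℝ => x + t • (y - x)) (y - x) 0 := by
      simpa using ((hasDerivAt_id (0:ℝ)).smul_const (y - x)).const_add x
    have hd' : HasFDerivAt h D (x + (0:ℝ) • (y - x)) := by simpa using hd
    exact hd'.comp_hasDerivAt (x := (0:ℝ)) hg
  have T : Tendsto (slope φ 0) (𝓝[>] 0) (𝓝 (D (y - x))) :=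
    (hasDerivAt_iff_tendsto_slope.mp hline).mono_left
      (nhdsWithin_mono 0 (fun t ht => ne_of_gt ht))
  have Tb : Tendsto (fun t : ℝ => h y - h x + (1 - t) * (μ / 2 * ‖x - y‖ ^ 2)) (𝓝[>] 0)
      (𝓝 (h y - h x + μ / 2 * ‖x - y‖ ^ 2)) := by
    have : Continuous (fun t : ℝ => h y - h x + (1 - t) * (μ / 2 * ‖x - y‖ ^ 2)) := by
      continuity
    have := (this.tendsto 0).mono_left (nhdsWithin_le_nhds (s := Set.Ioi 0))
    simpa using this
  have key : ∀ᶠ t in 𝓝[>] (0:ℝ),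
      h y - h x + (1 - t) * (μ / 2 * ‖x - y‖ ^ 2) ≤ slope φ 0 t := by
    filter_upwards [Ioc_mem_nhdsGT_of_mem (Set.mem_Ico.mpr ⟨le_refl (0:ℝ), one_pos⟩)] with t ht
    obtain ⟨ht0, ht1⟩ := ht
    have hcc := hc.2 (Set.mem_univ x) (Set.mem_univ y) (show (0:ℝ) ≤ 1 - t by linarith) ht0.le
      (show (1 - t) + t = 1 by ring)
    have hpt : (1 - t) • x + t • y = x + t • (y - x) := by
      rw [smul_sub, sub_smul, one_smul]; abel
    rw [hpt] at hcc
    rw [slope_def_field]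
    rw [le_div_iff₀ (by simpa using ht0)]
    simp only [smul_eq_mul, φ, zero_smul, add_zero, sub_zero] at hcc ⊢
    nlinarith [hcc]
  have := le_of_tendsto_of_tendsto Tb T (key.mono (fun t ht => ht))
  have hn : ‖x - y‖ = ‖y - x‖ := norm_sub_rev x y
  rw [hn] at this
  linarith
set_option maxHeartbeats 2000000 in
theorem stmt2 {n m : ℕ} (ℓ μ : ℝ) (hμ : 0 < μ) (hℓ : μ ≤ ℓ)
    (f : WithLp 2 (EuclideanSpace ℝ (Fin n) × EuclideanSpace ℝ (Fin m)) → ℝ)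
    (hdiff : ContDiff ℝ 2 f)
    (hlip : ∀ z z', ‖gradient f z - gradient f z'‖ ≤ ℓ * ‖z - z'‖)
    (hconc : ∀ x, StrongConcaveOn Set.univ μ
      (fun y => f ((WithLp.equiv 2 (EuclideanSpace ℝ (Fin n) × EuclideanSpace ℝ (Fin m))).symm (x, y)))) :
    (∀ x, ∃! y, IsMaxOn
        (fun y => f ((WithLp.equiv 2 (EuclideanSpace ℝ (Fin n) × EuclideanSpace ℝ (Fin m))).symm (x, y)))
        Set.univ y) ∧
    ∀ ystar : EuclideanSpace ℝ (Fin n) → EuclideanSpace ℝ (Fin m),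
      (∀ x, IsMaxOn
        (fun y => f ((WithLp.equiv 2 (EuclideanSpace ℝ (Fin n) × EuclideanSpace ℝ (Fin m))).symm (x, y)))
        Set.univ (ystar x)) →
      ∀ x x', ‖ystar x - ystar x'‖ ≤ (ℓ / μ) * ‖x - x'‖ := by
  set e := WithLp.equiv 2 (EuclideanSpace ℝ (Fin n) × EuclideanSpace ℝ (Fin m)) with he
  set g : EuclideanSpace ℝ (Fin n) → EuclideanSpace ℝ (Fin m) → ℝ :=
    fun x y => f (e.symm (x, y)) with hg
  have hfd : Differentiable ℝ f := hdiff.differentiable (by norm_num)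
  set L : EuclideanSpace ℝ (Fin m) →L[ℝ]
      WithLp 2 (EuclideanSpace ℝ (Fin n) × EuclideanSpace ℝ (Fin m)) :=
    ((WithLp.prodContinuousLinearEquiv 2 ℝ (EuclideanSpace ℝ (Fin n))
        (EuclideanSpace ℝ (Fin m))).symm.toContinuousLinearMap).comp
      (ContinuousLinearMap.inr ℝ _ _) with hLdef
  have hL : ∀ d : EuclideanSpace ℝ (Fin m), L d = e.symm (0, d) := fun d => rfl
  have hA : ∀ x y, HasFDerivAt (g x) ((fderiv ℝ f (e.symm (x, y))).comp L) y := by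
    intro x y
    have hAy : HasFDerivAt (fun y : EuclideanSpace ℝ (Fin m) => e.symm (x, y)) L y := by
      have hfun : (fun y : EuclideanSpace ℝ (Fin m) => e.symm (x, y)) =
          fun y : EuclideanSpace ℝ (Fin m) => e.symm (x, 0) + L y := by
        funext d
        rw [hL]
        show WithLp.toLp 2 (x, d) = WithLp.toLp 2 (x, 0) + WithLp.toLp 2 (0, d)
        rw [← WithLp.toLp_add]
        norm_num
      rw [hfun]
      exact L.hasFDerivAt.const_add _
    exact ((hfd _).hasFDerivAt).comp y hAy
  have hgradrel : ∀ z w, fderiv ℝ f z w = ⟪gradient f z, w⟫ := by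
    intro z w
    rw [gradient, InnerProductSpace.toDual_symm_apply]
  have hzero : ∀ x y0, IsMaxOn (g x) Set.univ y0 →
      ((fderiv ℝ f (e.symm (x, y0))).comp L) = 0 := by
    intro x y0 hm
    exact (hm.isLocalMax Filter.univ_mem).hasFDerivAt_eq_zero (hA x y0)
  have main : ∀ x y0 y1, g x y1 + μ / 2 * ‖y1 - y0‖ ^ 2 ≤
      g x y0 + (fderiv ℝ f (e.symm (x, y0))) (L (y1 - y0)) :=
    fun x y0 y1 => strongConcave_fderiv_ineq (hconc x) (hA x y0) y1
  have hnormL : ∀ d : EuclideanSpace ℝ (Fin m), ‖L d‖ = ‖d‖ := by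
    intro d
    rw [hL, he]
    exact WithLp.norm_toLp_snd 2 _ _ d
  constructor
  · -- existence and uniqueness
    intro x
    have hdg : Differentiable ℝ (g x) := fun y => (hA x y).differentiableAt
    have hcont : Continuous (g x) := hdg.continuous
    obtain ⟨C, hC0, hcoer⟩ : ∃ C : ℝ, 0 ≤ C ∧
        ∀ y : EuclideanSpace ℝ (Fin m), g x y + μ / 2 * ‖y‖ ^ 2 ≤ g x 0 + C * ‖y‖ := by
      refine ⟨‖(fderiv ℝ f (e.symm (x, 0))).comp L‖, norm_nonneg _, fun y => ?_⟩
      have hmain := main x 0 y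
      simp only [sub_zero] at hmain
      have h2 : (fderiv ℝ f (e.symm (x, 0))) (L y) ≤
          ‖(fderiv ℝ f (e.symm (x, 0))).comp L‖ * ‖y‖ := by
        calc (fderiv ℝ f (e.symm (x, 0))) (L y)
            = ((fderiv ℝ f (e.symm (x, 0))).comp L) y := rfl
          _ ≤ ‖((fderiv ℝ f (e.symm (x, 0))).comp L) y‖ := le_abs_self _
          _ ≤ ‖(fderiv ℝ f (e.symm (x, 0))).comp L‖ * ‖y‖ :=
              ((fderiv ℝ f (e.symm (x, 0))).comp L).le_opNorm y
      linarith
    set R : ℝ := 2 * C / μ + 1 with hR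
    have hRpos : 0 < R := by positivity
    have h0K : (0 : EuclideanSpace ℝ (Fin m)) ∈ Metric.closedBall (0 : EuclideanSpace ℝ (Fin m)) R := by
      simp [hRpos.le]
    obtain ⟨y0, hy0K, hy0max⟩ :=
      (isCompact_closedBall (0 : EuclideanSpace ℝ (Fin m)) R).exists_isMaxOn ⟨0, h0K⟩ hcont.continuousOn
    have hglobal : IsMaxOn (g x) Set.univ y0 := by
      intro y _
      by_cases hy : y ∈ Metric.closedBall (0 : EuclideanSpace ℝ (Fin m)) R
      · exact hy0max hy
      · have hylarge : R < ‖y‖ := by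
          simp only [Metric.mem_closedBall, dist_zero_right, not_le] at hy
          exact hy
        rw [hR] at hylarge
        have h1 := hcoer y
        have hstrict : g x y < g x 0 := by
          have hmu2 : μ * (2 * C / μ + 1) = 2 * C + μ := by field_simp
          have h2 : 2 * C + μ < μ * ‖y‖ := by
            rw [← hmu2]; exact (mul_lt_mul_iff_right₀ hμ).mpr hylarge
          have hy1 : 1 < ‖y‖ := by
            have : 0 ≤ 2 * C / μ := by positivity
            linarith
          have hprod : (2 * C + μ) * ‖y‖ ≤ μ * ‖y‖ * ‖y‖ :=
            mul_le_mul_of_nonneg_right h2.le (norm_nonneg y)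
          nlinarith [h1, hprod, hy1, hμ]
        have : g x 0 ≤ g x y0 := hy0max h0K
        simp only [Set.mem_setOf_eq]
        linarith
    refine ⟨y0, hglobal, ?_⟩
    intro y1 hy1
    -- uniqueness
    by_contra hne
    have heq : g x y1 = g x y0 :=
      le_antisymm (hglobal (Set.mem_univ y1)) (hy1 (Set.mem_univ y0))
    have hmid := (hconc x).2 (Set.mem_univ y1) (Set.mem_univ y0)
      (show (0:ℝ) ≤ 1/2 by norm_num) (show (0:ℝ) ≤ 1/2 by norm_num) (by norm_num)
    have hmax : g x ((1/2 : ℝ) • y1 + (1/2 : ℝ) • y0) ≤ g x y0 :=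
      hglobal (Set.mem_univ _)
    have hnpos : 0 < ‖y1 - y0‖ := by
      rw [norm_pos_iff, sub_ne_zero]; exact hne
    simp only [smul_eq_mul] at hmid
    have hmid' : 1 / 2 * g x y1 + 1 / 2 * g x y0 + 1 / 2 * (1 / 2) * (μ / 2 * ‖y1 - y0‖ ^ 2) ≤
        g x ((1 / 2 : ℝ) • y1 + (1 / 2 : ℝ) • y0) := hmid
    nlinarith [hmid', hmax, heq, hμ, hnpos, mul_pos hμ (pow_pos hnpos 2)]
  · -- Lipschitz
    intro ystar hstar x x'
    set y1 := ystar x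
    set y2 := ystar x'
    set d := y1 - y2 with hd
    by_cases hdz : d = 0
    · rw [hdz]
      simp only [norm_zero]
      have hl0 : 0 < ℓ := lt_of_lt_of_le hμ hℓ
      positivity
    have hdn : 0 < ‖d‖ := norm_pos_iff.mpr hdz
    have hz1 := hzero x y1 (hstar x)
    have hz2' := hzero x' y2 (hstar x')
    have m1 := main x y1 y2
    have m2 := main x y2 y1
    have h0 : (fderiv ℝ f (e.symm (x, y1))) (L (y2 - y1)) = 0 := by
      rw [← ContinuousLinearMap.comp_apply, hz1]; rfl
    rw [h0] at m1
    have hsum : μ * ‖d‖ ^ 2 ≤ (fderiv ℝ f (e.symm (x, y2))) (L d) := by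
      have hns : ‖y2 - y1‖ = ‖d‖ := by rw [hd, norm_sub_rev]
      rw [hns] at m1
      linarith [m1, m2]
    have hz2'app : (fderiv ℝ f (e.symm (x', y2))) (L d) = 0 := by
      rw [← ContinuousLinearMap.comp_apply, hz2']; rfl
    have hinner : (fderiv ℝ f (e.symm (x, y2))) (L d) =
        ⟪gradient f (e.symm (x, y2)) - gradient f (e.symm (x', y2)), L d⟫ := by
      rw [inner_sub_left, ← hgradrel, ← hgradrel, hz2'app]
      ring
    have hbound : (fderiv ℝ f (e.symm (x, y2))) (L d) ≤ ℓ * ‖x - x'‖ * ‖d‖ := by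
      rw [hinner]
      calc ⟪gradient f (e.symm (x, y2)) - gradient f (e.symm (x', y2)), L d⟫
          ≤ ‖gradient f (e.symm (x, y2)) - gradient f (e.symm (x', y2))‖ * ‖L d‖ :=
            real_inner_le_norm _ _
        _ ≤ (ℓ * ‖e.symm (x, y2) - e.symm (x', y2)‖) * ‖d‖ := by
            rw [hnormL]
            exact mul_le_mul_of_nonneg_right (hlip _ _) (norm_nonneg d)
        _ = ℓ * ‖x - x'‖ * ‖d‖ := by
            congr 2
            rw [show e.symm (x, y2) - e.symm (x', y2) = e.symm ((x, y2) - (x', y2)) from rfl]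
            have hps : ((x, y2) : EuclideanSpace ℝ (Fin n) × EuclideanSpace ℝ (Fin m)) - (x', y2) = (x - x', 0) := by
              simp [Prod.sub_def]
            rw [hps, WithLp.prod_norm_eq_of_L2]
            simp [he]
    have hfinal : μ * ‖d‖ ^ 2 ≤ ℓ * ‖x - x'‖ * ‖d‖ := le_trans hsum hbound
    have : μ * ‖d‖ ≤ ℓ * ‖x - x'‖ := by
      have := (mul_le_mul_iff_left₀ hdn).mpr (le_refl (1:ℝ))
      nlinarith [hfinal, hdn]
    rw [div_mul_eq_mul_div, le_div_iff₀ hμ]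
    linarith [this]
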